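/- Let a ∈ L^∞(ℝ;ℂ) and let T : L²(ℝ;ℂ) → L²(ℝ;ℂ) be the bounded linear operator T f = F⁻¹(a · F f). If T is compact, then for every t ∈ ℝ, lim_{δ→0⁺} ‖a · χ_{[t−δ, t+δ]}‖_{L^∞(ℝ)} = 0. -/

import Mathlib

open MeasureTheory Filter Set
open scoped ENNReal NNReal

/-- The Fourier transform `(Ff)(x) = ∫_ℝ f(t) e^{itx} dt` (defined whenever `f` is
integrable). -/
noncomputable def Ftransform (f : ℝ → ℂ) (x : ℝ) : ℂ :=
  ∫ t : ℝ, f t * Complex.exp (Complex.I * t * x)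

/-- The inverse Fourier transform `(F⁻¹g)(t) = (1/(2π)) ∫_ℝ g(x) e^{-itx} dx`. -/
noncomputable def Finv (g : ℝ → ℂ) (t : ℝ) : ℂ :=
  (2 * Real.pi)⁻¹ • ∫ x : ℝ, g x * Complex.exp (-(Complex.I * t * x))

private lemma indicator_eLpNorm_mono (a : ℝ → ℂ) {s s' : Set ℝ} (hss : s ⊆ s') (p : ℝ≥0∞) :
    eLpNorm (s.indicator a) p volume ≤ eLpNorm (s'.indicator a) p volume := by
  refine eLpNorm_mono fun x => ?_
  by_cases hx : x ∈ s
  · rw [Set.indicator_of_mem hx, Set.indicator_of_mem (hss hx)]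
  · rw [Set.indicator_of_notMem hx]; simp

private lemma norm_aux (v : ℝ≥0∞) (h0 : 0 < v) (ht : v ≠ ⊤) :
    ENNReal.ofReal (v.toReal ^ (-(1/2):ℝ)) * v ^ (1/2 : ℝ) = 1 := by
  have hvt : 0 < v.toReal := ENNReal.toReal_pos h0.ne' ht
  have hc : (0:ℝ) ≤ v.toReal ^ (-(1/2):ℝ) := (Real.rpow_pos_of_pos hvt _).le
  have h2 : v ^ (1/2:ℝ) = ENNReal.ofReal (v.toReal ^ (1/2:ℝ)) := by
    rw [← ENNReal.ofReal_rpow_of_pos hvt, ENNReal.ofReal_toReal ht]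
  rw [h2, ← ENNReal.ofReal_mul hc, ← Real.rpow_add hvt]
  norm_num

theorem compactness_implies_local_esssup_infinitesimal
    (a : ℝ → ℂ) (ha : MemLp a ⊤ (volume : Measure ℝ))
    (FL2 FinvL2 : Lp ℂ 2 (volume : Measure ℝ) →L[ℂ] Lp ℂ 2 (volume : Measure ℝ))
    (hFL2 : ∀ (f : ℝ → ℂ) (hf1 : Integrable f volume) (hf2 : MemLp f 2 volume),
      (FL2 (hf2.toLp f) : ℝ → ℂ) =ᵐ[volume] Ftransform f)
    (hFinvL2 : ∀ (g : ℝ → ℂ) (hg1 : Integrable g volume) (hg2 : MemLp g 2 volume),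
      (FinvL2 (hg2.toLp g) : ℝ → ℂ) =ᵐ[volume] Finv g)
    (hinv₁ : ∀ u, FinvL2 (FL2 u) = u) (hinv₂ : ∀ u, FL2 (FinvL2 u) = u)
    (T : Lp ℂ 2 (volume : Measure ℝ) →L[ℂ] Lp ℂ 2 (volume : Measure ℝ))
    (hT : ∀ (f : Lp ℂ 2 (volume : Measure ℝ))
      (hg : MemLp (fun x => a x * (FL2 f : ℝ → ℂ) x) 2 volume),
      T f = FinvL2 (hg.toLp _)) :
    IsCompactOperator T → ∀ t : ℝ, Tendsto (fun δ : ℝ =>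
      eLpNorm ((Set.Icc (t - δ) (t + δ)).indicator a) ⊤ (volume : Measure ℝ))
      (nhdsWithin 0 (Set.Ioi 0)) (nhds 0) := by
  intro hc t
  by_contra hten
  rw [ENNReal.tendsto_nhds_zero] at hten
  push_neg at hten
  obtain ⟨ε, hε, hfreq⟩ := hten
  obtain ⟨r, hr0, hrε⟩ := ENNReal.lt_iff_exists_nnreal_btwn.mp hε
  rw [ENNReal.coe_pos] at hr0
  -- key: the essential sup near t always exceeds r
  have key : ∀ δ : ℝ, 0 < δ →
      ¬ eLpNorm ((Set.Icc (t - δ) (t + δ)).indicator a) ⊤ volume ≤ (r : ℝ≥0∞) := by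
    intro δ hδ hle
    have h1 : ∀ᶠ δ' in nhdsWithin (0:ℝ) (Set.Ioi 0), δ' < δ :=
      Filter.Eventually.filter_mono nhdsWithin_le_nhds (eventually_lt_nhds hδ)
    have h2 : ∀ᶠ δ' in nhdsWithin (0:ℝ) (Set.Ioi 0), δ' ∈ Set.Ioi (0:ℝ) :=
      eventually_mem_nhdsWithin
    obtain ⟨δ', hδ'ε, hδ'lt, hδ'pos⟩ := (hfreq.and_eventually (h1.and h2)).exists
    refine (not_le.mpr hδ'ε) ?_
    refine le_trans ?_ hrε.le
    refine le_trans (indicator_eLpNorm_mono a ?_ ⊤) hle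
    exact Set.Icc_subset_Icc (by linarith) (by linarith)
  -- measurable representative
  have ham := ha.1
  set a' : ℝ → ℂ := ham.mk a with ha'def
  have ha'm : Measurable a' := ham.stronglyMeasurable_mk.measurable
  have haa' : a =ᵐ[volume] a' := ham.ae_eq_mk
  set A : Set ℝ := {x | (r:ℝ) < ‖a' x‖} with hAdef
  have hAm : MeasurableSet A := measurableSet_lt measurable_const ha'm.norm
  set m : ℝ → ℝ≥0∞ := fun δ => volume (A ∩ Set.Icc (t - δ) (t + δ)) with hmdef
  -- positivity of the superlevel sets
  have hpos : ∀ δ : ℝ, 0 < δ → 0 < m δ := by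
    intro δ hδ
    by_contra hz
    push_neg at hz
    have hz0 : m δ = 0 := le_antisymm hz (by simp)
    refine key δ hδ ?_
    rw [eLpNorm_exponent_top]
    refine eLpNormEssSup_le_of_ae_nnnorm_bound ?_
    have hnm : ∀ᵐ x ∂(volume : Measure ℝ), x ∉ A ∩ Set.Icc (t - δ) (t + δ) := measure_eq_zero_iff_ae_notMem.mp hz0
    filter_upwards [hnm, haa'] with x hx hax
    by_cases hxs : x ∈ Set.Icc (t - δ) (t + δ)
    · rw [Set.indicator_of_mem hxs]
      have hxA : x ∉ A := fun hA => hx ⟨hA, hxs⟩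
      have : ¬ (r:ℝ) < ‖a' x‖ := hxA
      rw [not_lt] at this
      rw [hax]
      exact NNReal.coe_le_coe.mp (by rwa [coe_nnnorm])
    · rw [Set.indicator_of_notMem hxs]; simp
  have hmfin : ∀ δ : ℝ, m δ < ⊤ := by
    intro δ
    refine lt_of_le_of_lt (measure_mono Set.inter_subset_right) ?_
    rw [Real.volume_Icc]; exact ENNReal.ofReal_lt_top
  -- recursively chosen radii
  set nxt : ℝ → ℝ := fun δ => min (δ/2) ((m δ).toReal/4) with hnxtdef
  set d : ℕ → ℝ := fun n => nxt^[n] 1 with hddef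
  have hdsucc : ∀ n, d (n+1) = nxt (d n) := fun n => Function.iterate_succ_apply' nxt n 1
  have hnxt_pos : ∀ δ : ℝ, 0 < δ → 0 < nxt δ := by
    intro δ hδ
    have h3 : (0:ℝ) < (m δ).toReal := ENNReal.toReal_pos (hpos δ hδ).ne' (hmfin δ).ne
    exact lt_min (by linarith) (by linarith)
  have hd_pos : ∀ n, 0 < d n := by
    intro n; induction n with
    | zero => norm_num [hddef]
    | succ k ih => rw [hdsucc]; exact hnxt_pos _ ih
  have hd_half : ∀ n, d (n+1) ≤ d n / 2 := fun n => by rw [hdsucc]; exact min_le_left _ _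
  have hd_anti : Antitone d :=
    antitone_nat_of_succ_le fun n => le_trans (hd_half n) (by linarith [hd_pos n])
  have hm_next : ∀ δ : ℝ, 0 < δ → m (nxt δ) < m δ := by
    intro δ hδ
    have h3 : (0:ℝ) < (m δ).toReal := ENNReal.toReal_pos (hpos δ hδ).ne' (hmfin δ).ne
    have h2 : nxt δ ≤ (m δ).toReal / 4 := min_le_right _ _
    calc m (nxt δ) ≤ ENNReal.ofReal (2 * nxt δ) := by
          refine le_trans (measure_mono Set.inter_subset_right) ?_
          rw [Real.volume_Icc]
          exact ENNReal.ofReal_le_ofReal (by linarith)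
      _ < ENNReal.ofReal ((m δ).toReal) := by
          rw [ENNReal.ofReal_lt_ofReal_iff h3]; linarith
      _ = m δ := ENNReal.ofReal_toReal (hmfin δ).ne
  -- the disjoint annular pieces
  set S : ℕ → Set ℝ := fun n =>
    A ∩ (Set.Icc (t - d n) (t + d n) \ Set.Icc (t - d (n+1)) (t + d (n+1))) with hSdef
  have hS_meas : ∀ n, MeasurableSet (S n) :=
    fun n => hAm.inter (measurableSet_Icc.diff measurableSet_Icc)
  have hS_fin : ∀ n, volume (S n) < ⊤ := by
    intro n
    refine lt_of_le_of_lt (measure_mono ?_) (hmfin (d n))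
    intro x hx; exact ⟨hx.1, hx.2.1⟩
  have hS_pos : ∀ n, 0 < volume (S n) := by
    intro n
    by_contra hz
    push_neg at hz
    have hz0 : volume (S n) = 0 := le_antisymm hz (by simp)
    have hsub : A ∩ Set.Icc (t - d n) (t + d n) ⊆
        S n ∪ (A ∩ Set.Icc (t - d (n+1)) (t + d (n+1))) := by
      intro x hx
      by_cases hx2 : x ∈ Set.Icc (t - d (n+1)) (t + d (n+1))
      · exact Or.inr ⟨hx.1, hx2⟩
      · exact Or.inl ⟨hx.1, hx.2, hx2⟩
    have : m (d n) ≤ m (d (n+1)) := by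
      calc m (d n) ≤ volume (S n) + m (d (n+1)) :=
            le_trans (measure_mono hsub) (measure_union_le _ _)
        _ = m (d (n+1)) := by rw [hz0, zero_add]
    have h2 : m (d (n+1)) < m (d n) := by rw [hdsucc n]; exact hm_next _ (hd_pos n)
    exact absurd this (not_le.mpr h2)
  have hS_subA : ∀ n, S n ⊆ A := fun n => Set.inter_subset_left
  -- pairwise disjointness
  have hdisj : ∀ i j : ℕ, i ≠ j → ∀ x, x ∈ S i → x ∉ S j := by
    have base : ∀ i j : ℕ, i < j → ∀ x, x ∈ S i → x ∉ S j := by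
      intro i j hij x hxi hxj
      have hdj : d j ≤ d (i+1) := hd_anti hij
      have : x ∈ Set.Icc (t - d (i+1)) (t + d (i+1)) :=
        Set.Icc_subset_Icc (by linarith) (by linarith) hxj.2.1
      exact hxi.2.2 this
    intro i j hij x hxi hxj
    rcases lt_or_gt_of_ne hij with h | h
    · exact base i j h x hxi hxj
    · exact base j i h x hxj hxi
  -- normalized indicator functions
  set v : ℕ → ℝ≥0∞ := fun n => volume (S n) with hvdef
  set c : ℕ → ℝ := fun n => (v n).toReal ^ (-(1/2):ℝ) with hcdef
  have hc_pos : ∀ n, 0 < c n :=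
    fun n => Real.rpow_pos_of_pos (ENNReal.toReal_pos (hS_pos n).ne' (hS_fin n).ne) _
  set g : ℕ → ℝ → ℂ := fun n => (S n).indicator (fun _ => ((c n : ℝ) : ℂ)) with hgdef
  have hgmem : ∀ n, MemLp (g n) 2 volume :=
    fun n => memLp_indicator_const 2 (hS_meas n) _ (Or.inr (hS_fin n).ne)
  have htwo : (1 / (2:ℝ≥0∞).toReal) = (1/2 : ℝ) := by norm_num
  have hg_norm : ∀ n, eLpNorm (g n) 2 volume = 1 := by
    intro n
    rw [hgdef]
    rw [eLpNorm_indicator_const (hS_meas n) two_ne_zero ENNReal.ofNat_ne_top, htwo]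
    rw [← enorm_norm, Complex.norm_real, enorm_norm, Real.enorm_eq_ofReal (hc_pos n).le]
    exact norm_aux (v n) (hS_pos n) (hS_fin n).ne
  set u : ℕ → Lp ℂ 2 (volume : Measure ℝ) := fun n => (hgmem n).toLp (g n) with hudef
  have hu_norm : ∀ n, ‖u n‖ = 1 := by
    intro n
    show ‖(hgmem n).toLp (g n)‖ = 1
    rw [Lp.norm_toLp (g n) (hgmem n), hg_norm n, ENNReal.toReal_one]
  set f : ℕ → Lp ℂ 2 (volume : Measure ℝ) := fun n => FinvL2 (u n) with hfdef
  have hFL2f : ∀ n, FL2 (f n) = u n := fun n => hinv₂ (u n)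
  have hf_bound : ∀ n, ‖f n‖ ≤ ‖FinvL2‖ := by
    intro n
    calc ‖FinvL2 (u n)‖ ≤ ‖FinvL2‖ * ‖u n‖ := FinvL2.le_opNorm (u n)
      _ = ‖FinvL2‖ := by rw [hu_norm n, mul_one]
  have hga : ∀ n, MemLp (fun x => a x * (FL2 (f n) : ℝ → ℂ) x) 2 volume := by
    intro n
    have h1 : MemLp (a • g n) 2 volume := (hgmem n).smul ha
    refine h1.ae_eq ?_
    have h2 : (FL2 (f n) : ℝ → ℂ) =ᵐ[volume] g n := by
      rw [hFL2f n]; exact (hgmem n).coeFn_toLp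
    filter_upwards [h2] with x hx
    rw [hx]; rfl
  have hTf : ∀ n, T (f n) = FinvL2 ((hga n).toLp _) := fun n => hT (f n) (hga n)
  -- lower bound on separation in frequency space
  have hlow : ∀ i j : ℕ, i ≠ j →
      (r : ℝ≥0∞) ≤ eLpNorm (fun x => a x * g i x - a x * g j x) 2 volume := by
    intro i j hij
    have hcomp : eLpNorm ((S i).indicator (fun _ => (((r : ℝ) * c i : ℝ) : ℂ))) 2 volume
        = (r : ℝ≥0∞) := by
      rw [eLpNorm_indicator_const (hS_meas i) two_ne_zero ENNReal.ofNat_ne_top, htwo]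
      rw [← enorm_norm, Complex.norm_real, enorm_norm,
        Real.enorm_eq_ofReal (mul_nonneg r.coe_nonneg (hc_pos i).le),
        ENNReal.ofReal_mul r.coe_nonneg, mul_assoc,
        norm_aux (v i) (hS_pos i) (hS_fin i).ne, mul_one, ENNReal.ofReal_coe_nnreal]
    rw [← hcomp]
    refine eLpNorm_mono_ae ?_
    filter_upwards [haa'] with x hax
    by_cases hx : x ∈ S i
    · rw [Set.indicator_of_mem hx]
      have hgi : g i x = ((c i : ℝ) : ℂ) := Set.indicator_of_mem hx _
      have hgj : g j x = 0 := Set.indicator_of_notMem (hdisj i j hij x hx) _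
      rw [hgi, hgj, mul_zero, sub_zero, hax]
      rw [norm_mul, Complex.norm_real, Complex.norm_real]
      have hxA : (r : ℝ) < ‖a' x‖ := (hS_subA i hx)
      have h1 : |(r:ℝ) * c i| = (r:ℝ) * c i :=
        abs_of_nonneg (mul_nonneg r.coe_nonneg (hc_pos i).le)
      have h2 : |c i| = c i := abs_of_nonneg (hc_pos i).le
      rw [Real.norm_eq_abs, Real.norm_eq_abs, h1, h2]
      exact mul_le_mul_of_nonneg_right hxA.le (hc_pos i).le
    · rw [Set.indicator_of_notMem hx]
      simp
  -- ‖FL2‖ is positive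
  have hFL2pos : 0 < ‖FL2‖ := by
    by_contra h0
    push_neg at h0
    have h1 : ‖FL2‖ = 0 := le_antisymm h0 (norm_nonneg _)
    have h2 : ‖u 0‖ ≤ ‖FL2‖ * ‖FinvL2 (u 0)‖ := by
      conv_lhs => rw [← hinv₂ (u 0)]
      exact FL2.le_opNorm _
    rw [hu_norm 0, h1, zero_mul] at h2
    linarith
  -- lower bound on separation of the images
  have hTlow : ∀ i j : ℕ, i ≠ j → (r : ℝ) / ‖FL2‖ ≤ ‖T (f i) - T (f j)‖ := by
    intro i j hij
    have hwFL2 : FL2 (T (f i) - T (f j)) = (hga i).toLp _ - (hga j).toLp _ := by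
      rw [map_sub, hTf i, hTf j]
      exact congrArg₂ (· - ·) (hinv₂ _) (hinv₂ _)
    set w : Lp ℂ 2 (volume : Measure ℝ) := (hga i).toLp _ - (hga j).toLp _ with hwdef
    have hwcoe : (w : ℝ → ℂ) =ᵐ[volume] fun x => a x * g i x - a x * g j x := by
      have e1 : ((hga i).toLp _ : ℝ → ℂ) =ᵐ[volume] fun x => a x * g i x := by
        refine (MemLp.coeFn_toLp _).trans ?_
        have h2 : (FL2 (f i) : ℝ → ℂ) =ᵐ[volume] g i := by
          rw [hFL2f i]; exact (hgmem i).coeFn_toLp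
        filter_upwards [h2] with x hx
        rw [hx]
      have e2 : ((hga j).toLp _ : ℝ → ℂ) =ᵐ[volume] fun x => a x * g j x := by
        refine (MemLp.coeFn_toLp _).trans ?_
        have h2 : (FL2 (f j) : ℝ → ℂ) =ᵐ[volume] g j := by
          rw [hFL2f j]; exact (hgmem j).coeFn_toLp
        filter_upwards [h2] with x hx
        rw [hx]
      refine (Lp.coeFn_sub _ _).trans ?_
      filter_upwards [e1, e2] with x h1 h2
      simp only [Pi.sub_apply, h1, h2]
    have hwnorm : (r : ℝ) ≤ ‖w‖ := by
      rw [Lp.norm_def, eLpNorm_congr_ae hwcoe]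
      have hfin : eLpNorm (fun x => a x * g i x - a x * g j x) 2 volume ≠ ⊤ := by
        rw [← eLpNorm_congr_ae hwcoe]
        exact Lp.eLpNorm_ne_top w
      calc (r:ℝ) = ((r : ℝ≥0∞)).toReal := by simp
        _ ≤ _ := ENNReal.toReal_mono hfin (hlow i j hij)
    have hop : ‖w‖ ≤ ‖FL2‖ * ‖T (f i) - T (f j)‖ := by
      rw [← hwFL2]; exact FL2.le_opNorm _
    rw [div_le_iff₀ hFL2pos]
    calc (r:ℝ) ≤ ‖FL2‖ * ‖T (f i) - T (f j)‖ := le_trans hwnorm hop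
      _ = ‖T (f i) - T (f j)‖ * ‖FL2‖ := mul_comm _ _
  -- the compactness contradiction
  obtain ⟨K, hK, hKmem⟩ := hc
  obtain ⟨η, hη, hball⟩ := Metric.mem_nhds_iff.mp hKmem
  set s : ℝ := η / (2 * (‖FinvL2‖ + 1)) with hsdef
  have hspos : 0 < s := by
    have : (0:ℝ) ≤ ‖FinvL2‖ := norm_nonneg _
    positivity
  set f' : ℕ → Lp ℂ 2 (volume : Measure ℝ) := fun n => (s : ℂ) • f n with hf'def
  have hf'ball : ∀ n, f' n ∈ Metric.ball (0 : Lp ℂ 2 (volume : Measure ℝ)) η := by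
    intro n
    rw [mem_ball_zero_iff]
    have h1 : ‖f' n‖ = s * ‖f n‖ := by
      show ‖(s:ℂ) • f n‖ = s * ‖f n‖
      rw [norm_smul, Complex.norm_real, Real.norm_eq_abs, abs_of_pos hspos]
    rw [h1]
    have h2 : s * ‖f n‖ ≤ s * ‖FinvL2‖ := by
      exact mul_le_mul_of_nonneg_left (hf_bound n) hspos.le
    refine lt_of_le_of_lt h2 ?_
    rw [hsdef, div_mul_eq_mul_div, div_lt_iff₀ (by positivity)]
    nlinarith [norm_nonneg FinvL2]
  have hTK : ∀ n, T (f' n) ∈ K := fun n => hball (hf'ball n)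
  obtain ⟨x, hxK, φ, hφ, hconv⟩ := hK.tendsto_subseq hTK
  set ρ : ℝ := s * ((r : ℝ) / ‖FL2‖) with hρdef
  have hρpos : 0 < ρ := by
    have : (0:ℝ) < r := hr0
    positivity
  rw [Metric.tendsto_atTop] at hconv
  obtain ⟨N, hN⟩ := hconv (ρ / 2) (by positivity)
  have hNe : φ N ≠ φ (N + 1) := (hφ (Nat.lt_succ_self N)).ne
  have hd1 : dist (T (f' (φ N))) x < ρ / 2 := hN N le_rfl
  have hd2 : dist (T (f' (φ (N+1)))) x < ρ / 2 := hN (N+1) (Nat.le_succ N)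
  have htri : dist (T (f' (φ N))) (T (f' (φ (N+1)))) < ρ :=
    lt_of_le_of_lt (dist_triangle _ x _) (by rw [dist_comm x]; linarith)
  have heq : dist (T (f' (φ N))) (T (f' (φ (N+1)))) = s * ‖T (f (φ N)) - T (f (φ (N+1)))‖ := by
    rw [dist_eq_norm]
    have : T (f' (φ N)) - T (f' (φ (N+1))) = (s:ℂ) • (T (f (φ N)) - T (f (φ (N+1)))) := by
      show T ((s:ℂ) • f (φ N)) - T ((s:ℂ) • f (φ (N+1))) = _
      rw [_root_.map_smul, _root_.map_smul, smul_sub]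
    rw [this, norm_smul, Complex.norm_real, Real.norm_eq_abs, abs_of_pos hspos]
  have hge : ρ ≤ dist (T (f' (φ N))) (T (f' (φ (N+1)))) := by
    rw [heq, hρdef]
    exact mul_le_mul_of_nonneg_left (hTlow _ _ hNe) hspos.le
  linarith
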